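/- Let E be a complete separable metric space, let ω : E × E → [0,∞] be lower semi-continuous, and let ξ = Σ_{i=1}^n δ_{a_i} and χ = Σ_{i=1}^k δ_{b_i} be configurations in M_ℕ(E) with n ≥ k ≥ 1. Then the partial transport cost satisfies T_{ω,0}(ξ, χ) = inf { Σ_{i=1}^k ω(x_i, y_i) : Σ_{i=1}^k δ_{x_i} ≤ ξ and χ = Σ_{i=1}^k δ_{y_i} }. -/

import Mathlib

open MeasureTheory ProbabilityTheory Filter Topology
open scoped ENNReal NNReal

noncomputable section

namespace PointProcess

variable {E : Type*} [MeasurableSpace E]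

open Classical in
/-- Relative entropy `H(μ | ν)`. -/
noncomputable def relEntropy (μ ν : Measure E) : ℝ≥0∞ :=
  if μ ≪ ν then ENNReal.ofReal (∫ x, Real.log (μ.rnDeriv ν x).toReal ∂μ) else ⊤

/-- `N` is a coupling of `μ` and `ν`. -/
def IsCoupling (N : Measure (E × E)) (μ ν : Measure E) : Prop :=
  N.map Prod.fst = μ ∧ N.map Prod.snd = ν

/-- Linear optimal transport cost `T_ω(ν | μ)` between measures of arbitrary mass. -/
noncomputable def transportCost (ω : E → E → ℝ≥0∞) (μ ν : Measure E) : ℝ≥0∞ :=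
  ⨅ (N : Measure (E × E)) (_ : IsCoupling N μ ν), ∫⁻ p, ω p.1 p.2 ∂N

/-- Generalized (weak) optimal transport cost `T_c(ν | μ)` associated with a cost
function `c : E × P(E) → [0,∞]`, using disintegration kernels. -/
noncomputable def genTransport (c : E → ProbabilityMeasure E → ℝ≥0∞) (μ ν : Measure E) : ℝ≥0∞ :=
  ⨅ (κ : Kernel E E) (h : IsMarkovKernel κ) (_ : μ.bind κ = ν),
    ∫⁻ x, c x ⟨κ x, h.isProbabilityMeasure x⟩ ∂μ

lemma mixture_isProbabilityMeasure (p q : ProbabilityMeasure E) (t : ℝ≥0) (ht : t ≤ 1) :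
    IsProbabilityMeasure
      ((t : ℝ≥0∞) • (p : Measure E) + ((1 - t : ℝ≥0) : ℝ≥0∞) • (q : Measure E)) := by
  constructor
  simp only [Measure.coe_add, Pi.add_apply, Measure.smul_apply, smul_eq_mul, measure_univ,
    mul_one]
  rw [← ENNReal.coe_add, add_tsub_cancel_of_le ht, ENNReal.coe_one]

/-- Convexity of a cost function in its second (measure) argument. -/
def ConvexInSecond (c : E → ProbabilityMeasure E → ℝ≥0∞) : Prop :=
  ∀ (x : E) (p q : ProbabilityMeasure E) (t : ℝ≥0) (ht : t ≤ 1),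
    c x ⟨(t : ℝ≥0∞) • (p : Measure E) + ((1 - t : ℝ≥0) : ℝ≥0∞) • (q : Measure E),
        mixture_isProbabilityMeasure p q t ht⟩
      ≤ (t : ℝ≥0∞) * c x p + ((1 - t : ℝ≥0) : ℝ≥0∞) * c x q

/-- A measure is a finite configuration: a finite sum of Dirac masses. -/
def IsFinConfig (μ : Measure E) : Prop :=
  ∃ (k : ℕ) (a : Fin k → E), μ = ∑ i, Measure.dirac (a i)

open Classical in
/-- Partial optimal transport cost `T_{ω,0}` between finite configurations. -/
noncomputable def partialTransport (ω : E → E → ℝ≥0∞) (ξ χ : Measure E) : ℝ≥0∞ :=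
  if χ Set.univ ≤ ξ Set.univ then
    ⨅ (ξ' : Measure E) (_ : ξ' ≤ ξ) (_ : IsFinConfig ξ') (_ : ξ' Set.univ = χ Set.univ),
      transportCost ω ξ' χ
  else
    ⨅ (χ' : Measure E) (_ : χ' ≤ χ) (_ : IsFinConfig χ') (_ : χ' Set.univ = ξ Set.univ),
      transportCost ω ξ χ'

/-- Law of the binomial point process of size `n` with sampling measure `μ`. -/
noncomputable def binomialLaw (μ : Measure E) [SigmaFinite μ] (n : ℕ) : Measure (Measure E) :=
  (Measure.pi (fun _ : Fin n => μ)).map (fun x => ∑ i, Measure.dirac (x i))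

/-- Law of the mixed binomial point process with sampling measure `μ` and size law `κ`. -/
noncomputable def mixedBinomialLaw (μ : Measure E) [SigmaFinite μ] (κ : Measure ℕ) :
    Measure (Measure E) :=
  κ.bind (fun n => binomialLaw μ n)

/-- `P` is the law of a Poisson point process with intensity measure `ν`: counts of disjoint
sets of finite measure are independent Poisson random variables with the corresponding means. -/
def IsPoissonPointProcess (ν : Measure E) (P : Measure (Measure E)) : Prop :=
  IsProbabilityMeasure P ∧
    ∀ (l : ℕ) (A : Fin l → Set E), (∀ i, MeasurableSet (A i)) →
      Pairwise (Function.onFun Disjoint A) → (∀ i, ν (A i) ≠ ∞) →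
      iIndepFun (fun i (η : Measure E) => η (A i)) P ∧
        ∀ i, P.map (fun η : Measure E => η (A i)) =
          (poissonMeasure (ν (A i)).toNNReal).map (fun k : ℕ => (k : ℝ≥0∞))

/-- The measure `ξ ∖ χ = Σ_x (ξ{x} - χ{x})₊ δ_x` (for configurations `ξ`). -/
noncomputable def pointDiff (ξ χ : Measure E) : Measure E :=
  ξ.withDensity (fun x => 1 - χ {x} / ξ {x})


/-- A measure whose restriction to every closed ball is a finite configuration. -/
def IsLocFinConfig {E : Type*} [MeasurableSpace E] [PseudoMetricSpace E] (μ : Measure E) : Prop :=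
  ∀ (x : E) (r : ℝ), IsFinConfig (μ.restrict (Metric.closedBall x r))


/-- `γ` satisfies the transport-entropy inequality `(T_c)` with constants `a₁, a₂`. -/
def TransportEntropy {E : Type*} [MeasurableSpace E] (c : E → ProbabilityMeasure E → ℝ≥0∞)
    (γ : Measure E) (a₁ a₂ : ℝ≥0∞) : Prop :=
  ∀ ν₁ ν₂ : Measure E, IsProbabilityMeasure ν₁ → IsProbabilityMeasure ν₂ →
    genTransport c ν₁ ν₂ ≤ a₁ * relEntropy ν₁ γ + a₂ * relEntropy ν₂ γ

/-- `γ` satisfies the transport-entropy inequality `(T_ω)` with constants `a₁, a₂`. -/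
def TransportEntropyLinear {E : Type*} [MeasurableSpace E] (ω : E → E → ℝ≥0∞)
    (γ : Measure E) (a₁ a₂ : ℝ≥0∞) : Prop :=
  ∀ ν₁ ν₂ : Measure E, IsProbabilityMeasure ν₁ → IsProbabilityMeasure ν₂ →
    transportCost ω ν₁ ν₂ ≤ a₁ * relEntropy ν₁ γ + a₂ * relEntropy ν₂ γ


section Helpers
variable {E : Type*} [MeasurableSpace E] [MeasurableSingletonClass E]
set_option linter.unusedSectionVars false

lemma cfg_univ (k : ℕ) (c : Fin k → E) : (∑ i, Measure.dirac (c i)) Set.univ = k := by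
  simp [Measure.coe_finset_sum]

lemma cfg_apply (k : ℕ) (c : Fin k → E) (A : Set E) :
    (∑ i, Measure.dirac (c i)) A = ∑ i, A.indicator (1 : E → ℝ≥0∞) (c i) := by
  simp [Measure.coe_finset_sum, Measure.dirac_apply]

open Classical in
lemma cfg_singleton (k : ℕ) (c : Fin k → E) (s : E) :
    (∑ i, Measure.dirac (c i)) {s}
      = (Finset.univ.filter (fun i => c i = s)).card := by
  classical
  rw [cfg_apply, Finset.card_filter]
  push_cast
  refine Finset.sum_congr rfl fun i _ => ?_
  by_cases h : c i = s <;> simp [Set.indicator, h]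

lemma cfg_finset_null (k : ℕ) (c : Fin k → E) (A : Set E) (hA : ∀ i, c i ∉ A) :
    (∑ i, Measure.dirac (c i)) A = 0 := by
  rw [cfg_apply]
  refine Finset.sum_eq_zero fun i _ => ?_
  simp [Set.indicator, hA i]

lemma meas_finset {α : Type*} [MeasurableSpace α] [MeasurableSingletonClass α]
    (μ : Measure α) (u : Finset α) : μ ↑u = ∑ p ∈ u, μ {p} := by
  rw [← setLIntegral_one, lintegral_finset]
  simp

lemma cfg_singleton_ne_top (k : ℕ) (c : Fin k → E) (s : E) :
    (∑ i, Measure.dirac (c i)) {s} ≠ ∞ := by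
  rw [cfg_singleton]; exact ENNReal.natCast_ne_top _

lemma cfg_singleton_ne_zero (k : ℕ) (c : Fin k → E) (i : Fin k) :
    (∑ j, Measure.dirac (c j)) {c i} ≠ 0 := by
  classical
  rw [cfg_singleton]
  have : i ∈ Finset.univ.filter (fun j => c j = c i) := by simp
  simp only [ne_eq, Nat.cast_eq_zero, Finset.card_eq_zero]
  intro h
  rw [h] at this
  exact absurd this (Finset.notMem_empty i)

lemma lower_bound (ω : E → E → ℝ≥0∞) (k : ℕ) (x b : Fin k → E)
    (N : Measure (E × E))
    (hN : IsCoupling N (∑ i, Measure.dirac (x i)) (∑ i, Measure.dirac (b i))) :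
    (⨅ σ : Equiv.Perm (Fin k), ∑ i, ω (x i) (b (σ i))) ≤ ∫⁻ p, ω p.1 p.2 ∂N := by
  classical
  set ξ : Measure E := ∑ i, Measure.dirac (x i) with hξ
  set χ : Measure E := ∑ i, Measure.dirac (b i) with hχ
  set S : Finset E := Finset.image x Finset.univ with hSdef
  set T : Finset E := Finset.image b Finset.univ with hTdef
  have hfst : ∀ A : Set E, MeasurableSet A → N (Prod.fst ⁻¹' A) = ξ A := fun A hA => by
    rw [← hN.1, Measure.map_apply measurable_fst hA]
  have hsnd : ∀ A : Set E, MeasurableSet A → N (Prod.snd ⁻¹' A) = χ A := fun A hA => by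
    rw [← hN.2, Measure.map_apply measurable_snd hA]
  have null1 : N (Prod.fst ⁻¹' (↑S : Set E)ᶜ) = 0 := by
    rw [hfst _ S.measurableSet.compl]
    exact cfg_finset_null k x _ (fun i h => h (by simp [hSdef]))
  have null2 : N (Prod.snd ⁻¹' (↑T : Set E)ᶜ) = 0 := by
    rw [hsnd _ T.measurableSet.compl]
    exact cfg_finset_null k b _ (fun i h => h (by simp [hTdef]))
  -- row sums
  have hrow : ∀ s : E, ∑ t ∈ T, N {(s, t)} = ξ {s} := by
    intro s
    have h1 : N (({s} : Set E) ×ˢ (↑T : Set E)) = ∑ t ∈ T, N {(s, t)} := by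
      have : (({s} : Set E) ×ˢ (↑T : Set E)) = ↑(({s} : Finset E) ×ˢ T) := by
        rw [Finset.coe_product, Finset.coe_singleton]
      rw [this, meas_finset, Finset.sum_product, Finset.sum_singleton]
    have h2 : N (Prod.fst ⁻¹' {s}) = N (({s} : Set E) ×ˢ (↑T : Set E)) := by
      refine le_antisymm ?_ (measure_mono (by rw [Set.prod_eq]; exact Set.inter_subset_left))
      calc N (Prod.fst ⁻¹' {s})
          ≤ N ((({s} : Set E) ×ˢ (↑T : Set E)) ∪ Prod.snd ⁻¹' (↑T : Set E)ᶜ) := by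
            refine measure_mono fun p hp => ?_
            by_cases hT : p.2 ∈ (↑T : Set E)
            · exact Or.inl ⟨hp, hT⟩
            · exact Or.inr hT
        _ ≤ N (({s} : Set E) ×ˢ (↑T : Set E)) + N (Prod.snd ⁻¹' (↑T : Set E)ᶜ) :=
            measure_union_le _ _
        _ = N (({s} : Set E) ×ˢ (↑T : Set E)) := by rw [null2, add_zero]
    rw [← h1, ← h2, hfst _ (measurableSet_singleton s)]
  have hcol : ∀ t : E, ∑ s ∈ S, N {(s, t)} = χ {t} := by
    intro t
    have h1 : N ((↑S : Set E) ×ˢ ({t} : Set E)) = ∑ s ∈ S, N {(s, t)} := by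
      have : ((↑S : Set E) ×ˢ ({t} : Set E)) = ↑(S ×ˢ ({t} : Finset E)) := by
        rw [Finset.coe_product, Finset.coe_singleton]
      rw [this, meas_finset, Finset.sum_product]
      exact Finset.sum_congr rfl fun s _ => Finset.sum_singleton _ _
    have h2 : N (Prod.snd ⁻¹' {t}) = N ((↑S : Set E) ×ˢ ({t} : Set E)) := by
      refine le_antisymm ?_ (measure_mono (by rw [Set.prod_eq]; exact Set.inter_subset_right))
      calc N (Prod.snd ⁻¹' {t})
          ≤ N (((↑S : Set E) ×ˢ ({t} : Set E)) ∪ Prod.fst ⁻¹' (↑S : Set E)ᶜ) := by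
            refine measure_mono fun p hp => ?_
            by_cases hS : p.1 ∈ (↑S : Set E)
            · exact Or.inl ⟨hS, hp⟩
            · exact Or.inr hS
        _ ≤ N ((↑S : Set E) ×ˢ ({t} : Set E)) + N (Prod.fst ⁻¹' (↑S : Set E)ᶜ) :=
            measure_union_le _ _
        _ = N ((↑S : Set E) ×ˢ ({t} : Set E)) := by rw [null1, add_zero]
    rw [← h1, ← h2, hsnd _ (measurableSet_singleton t)]
  have hNuniv : N Set.univ ≠ ∞ := by
    have h := hfst Set.univ MeasurableSet.univ
    simp only [Set.preimage_univ] at h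
    rw [h, hξ, cfg_univ]
    exact ENNReal.natCast_ne_top k
  have hNfin : ∀ p : E × E, N {p} ≠ ∞ := fun p =>
    ne_top_of_le_ne_top hNuniv (measure_mono (Set.subset_univ _))
  have hint : ∫⁻ p, ω p.1 p.2 ∂N = ∑ p ∈ S ×ˢ T, ω p.1 p.2 * N {p} := by
    have hP : MeasurableSet (↑(S ×ˢ T) : Set (E × E)) := (S ×ˢ T).measurableSet
    have hc : N ((↑(S ×ˢ T) : Set (E × E))ᶜ) = 0 := by
      refine measure_mono_null ?_ (measure_union_null null1 null2)
      intro p hp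
      rw [Finset.coe_product] at hp
      by_cases h1 : p.1 ∈ (↑S : Set E)
      · right; intro h2; exact hp ⟨h1, h2⟩
      · left; exact h1
    conv_lhs => rw [← Measure.restrict_add_restrict_compl (μ := N) hP]
    rw [lintegral_add_measure, Measure.restrict_eq_zero.mpr hc, lintegral_zero_measure,
      add_zero, lintegral_finset]
  set e : Fin k → Fin k → ℝ≥0∞ :=
    fun i j => N {(x i, b j)} * (ξ {x i})⁻¹ * (χ {b j})⁻¹ with hedef
  have hξ0 : ∀ i, ξ {x i} ≠ 0 := fun i => cfg_singleton_ne_zero k x i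
  have hξtop : ∀ i, ξ {x i} ≠ ∞ := fun i => cfg_singleton_ne_top k x _
  have hχ0 : ∀ j, χ {b j} ≠ 0 := fun j => cfg_singleton_ne_zero k b j
  have hχtop : ∀ j, χ {b j} ≠ ∞ := fun j => cfg_singleton_ne_top k b _
  have hT0 : ∀ t ∈ T, χ {t} ≠ 0 := by
    intro t ht
    obtain ⟨j, -, rfl⟩ := Finset.mem_image.mp ht
    exact hχ0 j
  have hS0 : ∀ s ∈ S, ξ {s} ≠ 0 := by
    intro s hs
    obtain ⟨i, -, rfl⟩ := Finset.mem_image.mp hs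
    exact hξ0 i
  -- grouping sums over j by the value of b
  have group_b : ∀ (f : E → ℝ≥0∞), ∑ j : Fin k, f (b j) = ∑ t ∈ T, χ {t} * f t := by
    intro f
    rw [Finset.sum_comp f b]
    exact Finset.sum_congr rfl fun t _ => by
      rw [nsmul_eq_mul, cfg_singleton]
  have group_x : ∀ (f : E → ℝ≥0∞), ∑ i : Fin k, f (x i) = ∑ s ∈ S, ξ {s} * f s := by
    intro f
    rw [Finset.sum_comp f x]
    exact Finset.sum_congr rfl fun s _ => by
      rw [nsmul_eq_mul, cfg_singleton]
  have cancel : ∀ (a c : ℝ≥0∞), c ≠ 0 → c ≠ ∞ → c * (a * c⁻¹) = a := by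
    intro a c h0 ht
    calc c * (a * c⁻¹) = a * (c * c⁻¹) := by ring
    _ = a := by rw [ENNReal.mul_inv_cancel h0 ht, mul_one]
  have hrowsum : ∀ i, ∑ j, e i j = 1 := by
    intro i
    have : ∀ j : Fin k, e i j = (fun t => N {(x i, t)} * (ξ {x i})⁻¹ * (χ {t})⁻¹) (b j) :=
      fun j => rfl
    rw [Finset.sum_congr rfl (fun j _ => this j), group_b (fun t => N {(x i, t)} * (ξ {x i})⁻¹ * (χ {t})⁻¹)]
    have : ∀ t ∈ T, χ {t} * (N {(x i, t)} * (ξ {x i})⁻¹ * (χ {t})⁻¹)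
        = N {(x i, t)} * (ξ {x i})⁻¹ := by
      intro t ht
      have h1 : χ {t} * (N {(x i, t)} * (ξ {x i})⁻¹ * (χ {t})⁻¹)
          = χ {t} * ((N {(x i, t)} * (ξ {x i})⁻¹) * (χ {t})⁻¹) := by ring
      rw [h1, cancel _ _ (hT0 t ht) (cfg_singleton_ne_top k b t)]
    rw [Finset.sum_congr rfl this, ← Finset.sum_mul, hrow (x i),
      ENNReal.mul_inv_cancel (hξ0 i) (hξtop i)]
  have hcolsum : ∀ j, ∑ i, e i j = 1 := by
    intro j
    have : ∀ i : Fin k, e i j = (fun s => N {(s, b j)} * (ξ {s})⁻¹ * (χ {b j})⁻¹) (x i) :=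
      fun i => rfl
    rw [Finset.sum_congr rfl (fun i _ => this i), group_x (fun s => N {(s, b j)} * (ξ {s})⁻¹ * (χ {b j})⁻¹)]
    have : ∀ s ∈ S, ξ {s} * (N {(s, b j)} * (ξ {s})⁻¹ * (χ {b j})⁻¹)
        = N {(s, b j)} * (χ {b j})⁻¹ := by
      intro s hs
      have h1 : ξ {s} * (N {(s, b j)} * (ξ {s})⁻¹ * (χ {b j})⁻¹)
          = ξ {s} * ((N {(s, b j)} * (χ {b j})⁻¹) * (ξ {s})⁻¹) := by ring
      rw [h1, cancel _ _ (hS0 s hs) (cfg_singleton_ne_top k x s)]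
    rw [Finset.sum_congr rfl this, ← Finset.sum_mul, hcol (b j),
      ENNReal.mul_inv_cancel (hχ0 j) (hχtop j)]
  have hcost : ∑ i, ∑ j, e i j * ω (x i) (b j) = ∫⁻ p, ω p.1 p.2 ∂N := by
    rw [hint]
    have inner : ∀ i : Fin k, ∑ j, e i j * ω (x i) (b j)
        = ∑ t ∈ T, N {(x i, t)} * (ξ {x i})⁻¹ * ω (x i) t := by
      intro i
      have : ∀ j : Fin k, e i j * ω (x i) (b j)
          = (fun t => N {(x i, t)} * (ξ {x i})⁻¹ * (χ {t})⁻¹ * ω (x i) t) (b j) := fun j => rfl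
      rw [Finset.sum_congr rfl (fun j _ => this j), group_b (fun t => N {(x i, t)} * (ξ {x i})⁻¹ * (χ {t})⁻¹ * ω (x i) t)]
      refine Finset.sum_congr rfl fun t ht => ?_
      have h1 : χ {t} * (N {(x i, t)} * (ξ {x i})⁻¹ * (χ {t})⁻¹ * ω (x i) t)
          = χ {t} * ((N {(x i, t)} * (ξ {x i})⁻¹ * ω (x i) t) * (χ {t})⁻¹) := by ring
      rw [h1, cancel _ _ (hT0 t ht) (cfg_singleton_ne_top k b t)]
    rw [Finset.sum_congr rfl (fun i _ => inner i)]
    have : ∀ i : Fin k, ∑ t ∈ T, N {(x i, t)} * (ξ {x i})⁻¹ * ω (x i) t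
        = (fun s => ∑ t ∈ T, N {(s, t)} * (ξ {s})⁻¹ * ω s t) (x i) := fun i => rfl
    rw [Finset.sum_congr rfl (fun i _ => this i), group_x (fun s => ∑ t ∈ T, N {(s, t)} * (ξ {s})⁻¹ * ω s t), Finset.sum_product]
    refine Finset.sum_congr rfl fun s hs => ?_
    rw [Finset.mul_sum]
    refine Finset.sum_congr rfl fun t ht => ?_
    have h1 : ξ {s} * (N {(s, t)} * (ξ {s})⁻¹ * ω s t)
        = ξ {s} * ((N {(s, t)} * ω s t) * (ξ {s})⁻¹) := by ring
    rw [h1, cancel _ _ (hS0 s hs) (cfg_singleton_ne_top k x s), mul_comm]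
  have hefin : ∀ i j, e i j ≠ ∞ := by
    intro i j
    exact ENNReal.mul_ne_top (ENNReal.mul_ne_top (hNfin _) (ENNReal.inv_ne_top.mpr (hξ0 i)))
      (ENNReal.inv_ne_top.mpr (hχ0 j))
  set M : Matrix (Fin k) (Fin k) ℝ := fun i j => (e i j).toReal with hMdef
  have hMds : M ∈ doublyStochastic ℝ (Fin k) := by
    rw [mem_doublyStochastic_iff_sum]
    refine ⟨fun i j => ENNReal.toReal_nonneg, fun i => ?_, fun j => ?_⟩
    · rw [show ∑ j, M i j = (∑ j, e i j).toReal from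
        (ENNReal.toReal_sum (fun j _ => hefin i j)).symm, hrowsum i, ENNReal.toReal_one]
    · rw [show ∑ i, M i j = (∑ i, e i j).toReal from
        (ENNReal.toReal_sum (fun i _ => hefin i j)).symm, hcolsum j, ENNReal.toReal_one]
  obtain ⟨w, hw0, hw1, hwM⟩ := exists_eq_sum_perm_of_mem_doublyStochastic hMds
  have hperm : ∀ (σ : Equiv.Perm (Fin k)) (i j : Fin k),
      Equiv.Perm.permMatrix ℝ σ i j = if σ i = j then 1 else 0 := by
    intro σ i j
    simp [Equiv.Perm.permMatrix, PEquiv.toMatrix_apply, Equiv.toPEquiv_apply]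
  have heM : ∀ i j, e i j
      = ∑ σ : Equiv.Perm (Fin k), ENNReal.ofReal (w σ * Equiv.Perm.permMatrix ℝ σ i j) := by
    intro i j
    have h1 : e i j = ENNReal.ofReal (M i j) := (ENNReal.ofReal_toReal (hefin i j)).symm
    have h2 : M i j = ∑ σ : Equiv.Perm (Fin k), w σ * Equiv.Perm.permMatrix ℝ σ i j := by
      rw [← hwM, Matrix.sum_apply]
      exact Finset.sum_congr rfl fun σ _ => rfl
    rw [h1, h2, ENNReal.ofReal_sum_of_nonneg]
    intro σ _
    refine mul_nonneg (hw0 σ) ?_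
    rw [hperm]
    split <;> norm_num
  have key : ∑ i, ∑ j, e i j * ω (x i) (b j)
      = ∑ σ : Equiv.Perm (Fin k), ENNReal.ofReal (w σ) * ∑ i, ω (x i) (b (σ i)) := by
    have h2 : ∀ i j, e i j * ω (x i) (b j)
        = ∑ σ : Equiv.Perm (Fin k),
            ENNReal.ofReal (w σ) * (if σ i = j then ω (x i) (b j) else 0) := by
      intro i j
      rw [heM i j, Finset.sum_mul]
      refine Finset.sum_congr rfl fun σ _ => ?_
      rw [hperm]
      split
      · rw [mul_one]
      · simp
    calc ∑ i, ∑ j, e i j * ω (x i) (b j)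
        = ∑ i, ∑ j, ∑ σ : Equiv.Perm (Fin k),
            ENNReal.ofReal (w σ) * (if σ i = j then ω (x i) (b j) else 0) :=
          Finset.sum_congr rfl fun i _ => Finset.sum_congr rfl fun j _ => h2 i j
      _ = ∑ σ : Equiv.Perm (Fin k), ∑ i, ∑ j,
            ENNReal.ofReal (w σ) * (if σ i = j then ω (x i) (b j) else 0) := by
          rw [show (∑ i : Fin k, ∑ j : Fin k, ∑ σ : Equiv.Perm (Fin k),
              ENNReal.ofReal (w σ) * (if σ i = j then ω (x i) (b j) else 0))
            = ∑ i : Fin k, ∑ σ : Equiv.Perm (Fin k), ∑ j : Fin k,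
              ENNReal.ofReal (w σ) * (if σ i = j then ω (x i) (b j) else 0) from
            Finset.sum_congr rfl fun i _ => Finset.sum_comm]
          exact Finset.sum_comm
      _ = ∑ σ : Equiv.Perm (Fin k), ENNReal.ofReal (w σ) * ∑ i, ω (x i) (b (σ i)) := by
          refine Finset.sum_congr rfl fun σ _ => ?_
          rw [Finset.mul_sum]
          refine Finset.sum_congr rfl fun i _ => ?_
          rw [← Finset.mul_sum]
          congr 1
          rw [Finset.sum_ite_eq]
          simp
  rw [← hcost, key]
  calc (⨅ σ : Equiv.Perm (Fin k), ∑ i, ω (x i) (b (σ i)))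
      = (∑ σ : Equiv.Perm (Fin k), ENNReal.ofReal (w σ))
          * ⨅ τ : Equiv.Perm (Fin k), ∑ i, ω (x i) (b (τ i)) := by
        rw [← ENNReal.ofReal_sum_of_nonneg (fun σ _ => hw0 σ), hw1, ENNReal.ofReal_one, one_mul]
    _ = ∑ σ : Equiv.Perm (Fin k), ENNReal.ofReal (w σ)
          * ⨅ τ : Equiv.Perm (Fin k), ∑ i, ω (x i) (b (τ i)) := Finset.sum_mul _ _ _
    _ ≤ ∑ σ : Equiv.Perm (Fin k), ENNReal.ofReal (w σ) * ∑ i, ω (x i) (b (σ i)) :=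
        Finset.sum_le_sum fun σ _ => mul_le_mul_right (iInf_le _ σ) _

lemma cfg_map {F : Type*} [MeasurableSpace F] (k : ℕ) (c : Fin k → E) {f : E → F}
    (hf : Measurable f) :
    (∑ i, Measure.dirac (c i)).map f = ∑ i, Measure.dirac (f (c i)) := by
  classical
  have : ∀ (s : Finset (Fin k)), (∑ i ∈ s, Measure.dirac (c i)).map f
      = ∑ i ∈ s, Measure.dirac (f (c i)) := by
    intro s
    induction s using Finset.induction with
    | empty => simp [Measure.map_zero]
    | insert _ _ h ih =>
      rw [Finset.sum_insert h, Finset.sum_insert h, Measure.map_add _ _ hf, ih,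
        Measure.map_dirac' hf]
  exact this _

lemma transportCost_cfg_le (ω : E → E → ℝ≥0∞) (k : ℕ) (x y : Fin k → E) :
    transportCost ω (∑ i, Measure.dirac (x i)) (∑ i, Measure.dirac (y i))
      ≤ ∑ i, ω (x i) (y i) := by
  have hc : IsCoupling (∑ i, Measure.dirac ((x i, y i)))
      (∑ i, Measure.dirac (x i)) (∑ i, Measure.dirac (y i)) :=
    ⟨cfg_map k _ measurable_fst, cfg_map k _ measurable_snd⟩
  refine le_trans (iInf₂_le (∑ i, Measure.dirac ((x i, y i))) hc) ?_
  rw [lintegral_finset_sum_measure]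
  exact le_of_eq (Finset.sum_congr rfl fun i _ => lintegral_dirac _ _)

end Helpers

/-- Proposition 2.6: the partial transport cost between two configurations with
`n ≥ k ≥ 1` points equals the minimal cost of transporting a `k`-point sub-configuration of `ξ`
onto `χ`. -/
theorem partialTransport_config
    {E : Type*} [MetricSpace E] [CompleteSpace E] [TopologicalSpace.SeparableSpace E]
    [MeasurableSpace E] [BorelSpace E]
    (ω : E → E → ℝ≥0∞) (hω : LowerSemicontinuous (fun p : E × E => ω p.1 p.2))
    (n k : ℕ) (hk : 1 ≤ k) (hkn : k ≤ n) (a : Fin n → E) (b : Fin k → E) :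
    partialTransport ω (∑ i, Measure.dirac (a i)) (∑ i, Measure.dirac (b i))
      = ⨅ (x : Fin k → E) (y : Fin k → E)
          (_ : (∑ i, Measure.dirac (x i)) ≤ ∑ i, Measure.dirac (a i))
          (_ : (∑ i, Measure.dirac (b i)) = ∑ i, Measure.dirac (y i)),
          ∑ i, ω (x i) (y i) := by
  classical
  have hmass : (∑ i, Measure.dirac (b i)) Set.univ ≤ (∑ i, Measure.dirac (a i)) Set.univ := by
    rw [cfg_univ, cfg_univ]
    exact_mod_cast hkn
  rw [partialTransport, if_pos hmass]
  apply le_antisymm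
  · refine le_iInf fun x => le_iInf fun y => le_iInf fun hx => le_iInf fun hy => ?_
    refine le_trans (iInf_le_of_le (∑ i, Measure.dirac (x i))
      (iInf_le_of_le hx (iInf_le_of_le ⟨k, x, rfl⟩
        (iInf_le_of_le (by rw [cfg_univ, cfg_univ]) le_rfl)))) ?_
    rw [hy]
    exact transportCost_cfg_le ω k x y
  · refine le_iInf fun ξ' => le_iInf fun hle => le_iInf fun hconf => le_iInf fun hm => ?_
    obtain ⟨m, x0, rfl⟩ := hconf
    have hmk : m = k := by
      rw [cfg_univ, cfg_univ] at hm
      exact_mod_cast hm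
    subst hmk
    refine le_iInf fun N => le_iInf fun hN => ?_
    refine le_trans (le_iInf fun σ => ?_) (lower_bound ω m x0 b N hN)
    refine iInf_le_of_le x0 (iInf_le_of_le (fun i => b (σ i))
      (iInf_le_of_le hle (iInf_le_of_le ?_ le_rfl)))
    exact (Equiv.sum_comp σ (fun i => Measure.dirac (b i))).symm


end PointProcess
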